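/- Let X ⊆ ℝⁿ be a closed convex set and f a polynomial with f ≥ m > 0 on X. Then there exists N₀ ∈ ℝ such that for all N ≥ N₀ the function Φ_N(x) = e^{N e^{|x|²}} f(x) is strongly convex on X. -/

import Mathlib

open Real Set MvPolynomial

/- Auxiliary lemmas -/

lemma aux_coord {n : ℕ} (w : EuclideanSpace ℝ (Fin n)) (j : Fin n) : |w j| ≤ ‖w‖ := by
  rw [EuclideanSpace.norm_eq, ← Real.sqrt_sq_eq_abs]
  apply Real.sqrt_le_sqrt
  calc (w j) ^ 2 = ‖w j‖ ^ 2 := by rw [Real.norm_eq_abs, sq_abs]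
    _ ≤ ∑ i, ‖w i‖ ^ 2 :=
      Finset.single_le_sum (f := fun i => ‖w i‖ ^ 2) (fun i _ => sq_nonneg _)
        (Finset.mem_univ j)

lemma aux_deriv_line {n : ℕ} (g : MvPolynomial (Fin n) ℝ) (x v : Fin n → ℝ) :
    Polynomial.derivative
        (MvPolynomial.aeval (fun i => Polynomial.C (x i) + Polynomial.C (v i) * Polynomial.X) g) =
      ∑ i, Polynomial.C (v i) *
        MvPolynomial.aeval (fun i => Polynomial.C (x i) + Polynomial.C (v i) * Polynomial.X)
          (MvPolynomial.pderiv i g) := by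
  induction g using MvPolynomial.induction_on with
  | C a => simp
  | add p q hp hq => simp [hp, hq, mul_add, Finset.sum_add_distrib]
  | mul_X p j hp =>
      rw [map_mul, MvPolynomial.aeval_X, Polynomial.derivative_mul, hp]
      have key : ∀ i : Fin n,
          Polynomial.C (v i) * MvPolynomial.aeval
              (fun i => Polynomial.C (x i) + Polynomial.C (v i) * Polynomial.X)
              (MvPolynomial.pderiv i (p * MvPolynomial.X j)) =
            (Polynomial.C (v i) * MvPolynomial.aeval
                (fun i => Polynomial.C (x i) + Polynomial.C (v i) * Polynomial.X)
                (MvPolynomial.pderiv i p)) *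
              (Polynomial.C (x j) + Polynomial.C (v j) * Polynomial.X) +
              (if j = i then Polynomial.C (v j) * MvPolynomial.aeval
                (fun i => Polynomial.C (x i) + Polynomial.C (v i) * Polynomial.X) p else 0) := by
        intro i
        rw [MvPolynomial.pderiv_mul, MvPolynomial.pderiv_X, map_add, map_mul,
          MvPolynomial.aeval_X]
        rcases eq_or_ne j i with h | h
        · subst h; simp; ring
        · rw [if_neg h]; simp [Pi.single_eq_of_ne h]; ring
      rw [Finset.sum_congr rfl fun i _ => key i, Finset.sum_add_distrib,
        Finset.sum_ite_eq, if_pos (Finset.mem_univ j), Finset.sum_mul]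
      have hder : Polynomial.derivative
          (Polynomial.C (x j) + Polynomial.C (v j) * Polynomial.X) = Polynomial.C (v j) := by
        simp
      rw [hder]; ring

lemma aux_eval_line {n : ℕ} (g : MvPolynomial (Fin n) ℝ) (x v : Fin n → ℝ) (t : ℝ) :
    Polynomial.eval t
        (MvPolynomial.aeval (fun i => Polynomial.C (x i) + Polynomial.C (v i) * Polynomial.X) g) =
      MvPolynomial.eval (fun i => x i + t * v i) g := by
  have h := congrFun (congrArg (fun (φ : MvPolynomial (Fin n) ℝ →ₐ[ℝ] ℝ) => φ.toFun)
    (MvPolynomial.comp_aeval (f := fun i => Polynomial.C (x i) + Polynomial.C (v i) * Polynomial.X)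
      (φ := Polynomial.aeval t))) g
  simp only [AlgHom.toFun_eq_coe, AlgHom.coe_comp, Function.comp_apply] at h
  rw [show ((Polynomial.aeval t) ((MvPolynomial.aeval fun i =>
      Polynomial.C (x i) + Polynomial.C (v i) * Polynomial.X) g)) = Polynomial.eval t
      ((MvPolynomial.aeval fun i => Polynomial.C (x i) + Polynomial.C (v i) * Polynomial.X) g)
    from by rw [Polynomial.aeval_def, ← Polynomial.eval_map, Algebra.algebraMap_self,
      Polynomial.map_id]] at h
  rw [h]
  simp only [map_add, map_mul, Polynomial.aeval_C, Polynomial.aeval_X,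
    Algebra.algebraMap_self, RingHom.id_apply]
  rw [show (MvPolynomial.aeval fun i => x i + v i * t) g =
    MvPolynomial.eval (fun i => x i + v i * t) g from by
      rw [← MvPolynomial.coe_aeval_eq_eval]; rfl]
  rw [show (fun i => x i + v i * t) = (fun i => x i + t * v i) from by funext i; ring]

lemma aux_growth {n : ℕ} (g : MvPolynomial (Fin n) ℝ) :
    ∀ ε : ℝ, 0 < ε → ∃ C : ℝ, 0 ≤ C ∧ ∀ w : EuclideanSpace ℝ (Fin n),
      |MvPolynomial.eval (fun i => w i) g| ≤ C * Real.exp (ε * ‖w‖ ^ 2) := by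
  induction g using MvPolynomial.induction_on with
  | C a =>
      intro ε hε
      exact ⟨|a|, abs_nonneg a, fun w => by
        simpa using le_mul_of_one_le_right (abs_nonneg a)
          (Real.one_le_exp (by positivity))⟩
  | add p q hp hq =>
      intro ε hε
      obtain ⟨Cp, hCp, hp⟩ := hp ε hε
      obtain ⟨Cq, hCq, hq⟩ := hq ε hε
      refine ⟨Cp + Cq, by positivity, fun w => ?_⟩
      calc |MvPolynomial.eval (fun i => w i) (p + q)|
          ≤ |MvPolynomial.eval (fun i => w i) p| + |MvPolynomial.eval (fun i => w i) q| := by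
            rw [map_add]; exact abs_add_le _ _
        _ ≤ Cp * Real.exp (ε * ‖w‖ ^ 2) + Cq * Real.exp (ε * ‖w‖ ^ 2) := add_le_add (hp w) (hq w)
        _ = (Cp + Cq) * Real.exp (ε * ‖w‖ ^ 2) := by ring
  | mul_X p j hp =>
      intro ε hε
      obtain ⟨Cp, hCp, hp⟩ := hp (ε / 2) (by positivity)
      refine ⟨Cp * Real.exp (1 / (2 * ε)), by positivity, fun w => ?_⟩
      have h1 : |MvPolynomial.eval (fun i => w i) (p * MvPolynomial.X j)| =
          |MvPolynomial.eval (fun i => w i) p| * |w j| := by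
        rw [map_mul, MvPolynomial.eval_X, abs_mul]
      have h2 : |w j| ≤ ‖w‖ := aux_coord w j
      have hle : 2 * ε * ‖w‖ ≤ 1 + ε ^ 2 * ‖w‖ ^ 2 := by nlinarith [sq_nonneg (ε * ‖w‖ - 1)]
      have h3 : ‖w‖ ≤ Real.exp (1 / (2 * ε)) * Real.exp (ε / 2 * ‖w‖ ^ 2) := by
        have hle2 : ‖w‖ ≤ 1 / (2 * ε) + ε / 2 * ‖w‖ ^ 2 := by
          rw [← sub_nonneg, show 1 / (2 * ε) + ε / 2 * ‖w‖ ^ 2 - ‖w‖ =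
            (1 + ε ^ 2 * ‖w‖ ^ 2 - 2 * ε * ‖w‖) / (2 * ε) from by field_simp]
          apply div_nonneg (by linarith) (by positivity)
        calc ‖w‖ ≤ Real.exp ‖w‖ := by linarith [Real.add_one_le_exp ‖w‖]
          _ ≤ _ := by rw [← Real.exp_add]; exact Real.exp_le_exp.mpr hle2
      rw [h1]
      calc |MvPolynomial.eval (fun i => w i) p| * |w j|
          ≤ (Cp * Real.exp (ε / 2 * ‖w‖ ^ 2)) *
            (Real.exp (1 / (2 * ε)) * Real.exp (ε / 2 * ‖w‖ ^ 2)) :=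
            mul_le_mul (hp w) (h2.trans h3) (abs_nonneg _) (by positivity)
        _ = Cp * Real.exp (1 / (2 * ε)) *
            (Real.exp (ε / 2 * ‖w‖ ^ 2) * Real.exp (ε / 2 * ‖w‖ ^ 2)) := by ring
        _ = Cp * Real.exp (1 / (2 * ε)) * Real.exp (ε * ‖w‖ ^ 2) := by
            rw [← Real.exp_add]; congr 1; ring

lemma aux_q_deriv (K I nv t : ℝ) :
    HasDerivAt (fun s : ℝ => K + 2*I*s + nv*s^2) (2*I + 2*nv*t) t := by
  have h1 : HasDerivAt (fun s : ℝ => 2*I*s) (2*I) t := by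
    simpa using (hasDerivAt_id t).const_mul (2*I)
  have h2 : HasDerivAt (fun s : ℝ => nv*s^2) (2*nv*t) t := by
    have := (hasDerivAt_pow 2 t).const_mul nv
    exact this.congr_deriv (by ring)
  exact (h1.const_add K).add h2

lemma aux_psi_deriv (N c K I nv : ℝ) (P : Polynomial ℝ) (t : ℝ) :
    HasDerivAt
      (fun s => Real.exp (N * Real.exp (K + 2*I*s + nv*s^2)) * Polynomial.eval s P - c*s^2)
      (Real.exp (N * Real.exp (K + 2*I*t + nv*t^2)) *
          (N * Real.exp (K + 2*I*t + nv*t^2) * (2*I + 2*nv*t)) * Polynomial.eval t P +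
        Real.exp (N * Real.exp (K + 2*I*t + nv*t^2)) * Polynomial.eval t P.derivative
        - c*(2*t)) t := by
  have hq := aux_q_deriv K I nv t
  have hA : HasDerivAt (fun s => Real.exp (N * Real.exp (K + 2*I*s + nv*s^2)))
      (Real.exp (N * Real.exp (K + 2*I*t + nv*t^2)) *
        (N * Real.exp (K + 2*I*t + nv*t^2) * (2*I + 2*nv*t))) t := by
    have := ((hq.exp.const_mul N).exp)
    convert this using 1
    ring
  have := (hA.mul (P.hasDerivAt t)).sub ((hasDerivAt_pow 2 t).const_mul c)
  exact this.congr_deriv (by ring)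

lemma aux_psi_deriv2 (N c K I nv : ℝ) (P : Polynomial ℝ) (t : ℝ) :
    HasDerivAt
      (fun s => Real.exp (N * Real.exp (K + 2*I*s + nv*s^2)) *
          (N * Real.exp (K + 2*I*s + nv*s^2) * (2*I + 2*nv*s)) * Polynomial.eval s P +
        Real.exp (N * Real.exp (K + 2*I*s + nv*s^2)) * Polynomial.eval s P.derivative
        - c*(2*s))
      (Real.exp (N * Real.exp (K + 2*I*t + nv*t^2)) *
          ((N * Real.exp (K + 2*I*t + nv*t^2))^2 * (2*I + 2*nv*t)^2 * Polynomial.eval t P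
            + N * Real.exp (K + 2*I*t + nv*t^2) * ((2*I + 2*nv*t)^2 + 2*nv) * Polynomial.eval t P
            + 2 * (N * Real.exp (K + 2*I*t + nv*t^2) * (2*I + 2*nv*t)) *
                Polynomial.eval t P.derivative
            + Polynomial.eval t P.derivative.derivative)
        - c*2) t := by
  have hq := aux_q_deriv K I nv t
  have hE : HasDerivAt (fun s => N * Real.exp (K + 2*I*s + nv*s^2))
      (N * Real.exp (K + 2*I*t + nv*t^2) * (2*I + 2*nv*t)) t := by
    have := hq.exp.const_mul N
    exact this.congr_deriv (by ring)
  have hA : HasDerivAt (fun s => Real.exp (N * Real.exp (K + 2*I*s + nv*s^2)))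
      (Real.exp (N * Real.exp (K + 2*I*t + nv*t^2)) *
        (N * Real.exp (K + 2*I*t + nv*t^2) * (2*I + 2*nv*t))) t := hE.exp
  have hlin : HasDerivAt (fun s : ℝ => 2*I + 2*nv*s) (2*nv) t := by
    simpa using (hasDerivAt_id t).const_mul (2*nv) |>.const_add (2*I)
  have hu : HasDerivAt (fun s => N * Real.exp (K + 2*I*s + nv*s^2) * (2*I + 2*nv*s))
      (N * Real.exp (K + 2*I*t + nv*t^2) * (2*I + 2*nv*t) * (2*I + 2*nv*t)
        + N * Real.exp (K + 2*I*t + nv*t^2) * (2*nv)) t := hE.mul hlin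
  have h1 := (hA.mul hu).mul (P.hasDerivAt t)
  have h2 := hA.mul (P.derivative.hasDerivAt t)
  have h3 := ((hasDerivAt_id t).const_mul (c*2))
  have := (h1.add h2).sub h3
  refine (this.congr_deriv ?_).congr_of_eventuallyEq (Filter.Eventually.of_forall fun s => ?_)
  · simp only [Pi.mul_apply, Pi.add_apply, Pi.sub_apply]; ring
  · simp only [id_eq, Pi.mul_apply, Pi.add_apply, Pi.sub_apply]; ring

set_option maxHeartbeats 1000000 in
/-- Let `X ⊆ ℝⁿ` be closed convex and `f` a polynomial with `f ≥ m > 0`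
on `X`. Then there exists `N₀ ∈ ℝ` such that for all `N ≥ N₀` the function
`Φ_N(x) = e^{N e^{|x|²}} f(x)` is strongly convex on `X`. -/
theorem stmt13 {n : ℕ} (X : Set (EuclideanSpace ℝ (Fin n)))
    (hXcl : IsClosed X) (hXcon : Convex ℝ X)
    (f : MvPolynomial (Fin n) ℝ) (m : ℝ) (hm : 0 < m)
    (hmf : ∀ x ∈ X, m ≤ MvPolynomial.eval (fun i => x i) f) :
    ∃ N₀ : ℝ, ∀ N : ℝ, N₀ ≤ N →
      ∃ μ > 0, StrongConvexOn X μ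
        (fun x => Real.exp (N * Real.exp (‖x‖ ^ 2)) * MvPolynomial.eval (fun i => x i) f) := by
  classical
  choose C1 hC1n hC1 using fun i : Fin n =>
    aux_growth (MvPolynomial.pderiv i f) (1/4) (by norm_num)
  choose C2 hC2n hC2 using fun i j : Fin n =>
    aux_growth (MvPolynomial.pderiv i (MvPolynomial.pderiv j f)) (1/2) (by norm_num)
  set S1 : ℝ := ∑ i, C1 i with hS1def
  set S2 : ℝ := ∑ i, ∑ j, C2 j i with hS2def
  have hS1n : 0 ≤ S1 := Finset.sum_nonneg fun i _ => hC1n i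
  have hS2n : 0 ≤ S2 := Finset.sum_nonneg fun i _ =>
    Finset.sum_nonneg fun j _ => hC2n j i
  clear_value S1 S2
  refine ⟨max ((S1^2/m + S2 + 2*m)/(2*m)) 1, fun N hN => ⟨m, hm, hXcon, ?_⟩⟩
  have hN1 : 1 ≤ N := le_trans (le_max_right _ _) hN
  have hN0 : 0 ≤ N := by linarith
  have hNm : S1^2/m + S2 + 2*m ≤ 2*N*m := by
    have h := le_trans (le_max_left ((S1^2/m + S2 + 2*m)/(2*m)) 1) hN
    rw [div_le_iff₀ (by positivity)] at h
    linarith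
  have hNm2 : S1^2 + m*S2 + 2*m^2 ≤ 2*N*m^2 := by
    have h := mul_le_mul_of_nonneg_right hNm hm.le
    rw [add_mul, add_mul, div_mul_cancel₀ _ hm.ne'] at h
    linarith [h]
  intro x hx y hy a b ha hb hab
  set K : ℝ := ‖x‖^2 with hK
  set I : ℝ := inner ℝ x (y - x) with hI
  set nv : ℝ := ‖y - x‖^2 with hnv
  have hnv0 : 0 ≤ nv := by rw [hnv]; positivity
  set P : Polynomial ℝ := MvPolynomial.aeval
    (fun i => Polynomial.C (x i) + Polynomial.C ((y - x) i) * Polynomial.X) f with hPdef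
  -- coordinates of points on the segment
  have hcoord : ∀ t : ℝ, (fun i => x i + t * (y - x) i) =
      (fun i => (x + t • (y - x) : EuclideanSpace ℝ (Fin n)) i) := by
    intro t; funext i
    simp [PiLp.add_apply, PiLp.smul_apply, smul_eq_mul]
  -- quadratic formula for the norm along the segment
  have hq_eq : ∀ t : ℝ, K + 2*I*t + nv*t^2 = ‖x + t • (y - x)‖^2 := by
    intro t
    rw [norm_add_sq_real, real_inner_smul_right, norm_smul]
    simp only [Real.norm_eq_abs, mul_pow, sq_abs]
    rw [hK, hI, hnv]; ring
  -- polynomial along the segment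
  have hPt : ∀ t : ℝ, Polynomial.eval t P =
      MvPolynomial.eval (fun i => (x + t • (y - x) : EuclideanSpace ℝ (Fin n)) i) f := by
    intro t
    rw [hPdef, aux_eval_line f (fun i => x i) (fun i => (y - x) i) t, hcoord t]
  have hmem : ∀ t ∈ Icc (0:ℝ) 1, x + t • (y - x) ∈ X := fun t ht =>
    hXcon.add_smul_sub_mem hx hy ht
  have hptm : ∀ t ∈ Icc (0:ℝ) 1, m ≤ Polynomial.eval t P := by
    intro t ht
    rw [hPt t]
    exact hmf _ (hmem t ht)
  -- first derivative bound
  have hp1bound : ∀ t : ℝ, |Polynomial.eval t (Polynomial.derivative P)| ≤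
      ‖y - x‖ * S1 * Real.exp (1/4 * ‖x + t • (y - x)‖^2) := by
    intro t
    rw [hPdef, aux_deriv_line f (fun i => x i) (fun i => (y - x) i),
      Polynomial.eval_finset_sum]
    refine le_trans (Finset.abs_sum_le_sum_abs _ _) ?_
    have hterm : ∀ i : Fin n,
        |Polynomial.eval t (Polynomial.C ((y - x) i) * MvPolynomial.aeval
            (fun i => Polynomial.C (x i) + Polynomial.C ((y - x) i) * Polynomial.X)
            (MvPolynomial.pderiv i f))| ≤
          ‖y - x‖ * (C1 i * Real.exp (1/4 * ‖x + t • (y - x)‖^2)) := by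
      intro i
      rw [Polynomial.eval_mul, Polynomial.eval_C, abs_mul,
        aux_eval_line (MvPolynomial.pderiv i f) (fun i => x i) (fun i => (y - x) i) t,
        hcoord t]
      exact mul_le_mul (aux_coord (y - x) i) (hC1 i (x + t • (y - x))) (abs_nonneg _)
        (norm_nonneg _)
    refine le_trans (Finset.sum_le_sum fun i _ => hterm i) (le_of_eq ?_)
    rw [← Finset.mul_sum, ← Finset.sum_mul, mul_assoc, hS1def]
  -- second derivative bound
  have hstep : Polynomial.derivative (Polynomial.derivative P) =
      ∑ i, Polynomial.C ((y - x) i) * ∑ j, Polynomial.C ((y - x) j) *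
        MvPolynomial.aeval
          (fun i => Polynomial.C (x i) + Polynomial.C ((y - x) i) * Polynomial.X)
          (MvPolynomial.pderiv j (MvPolynomial.pderiv i f)) := by
    rw [hPdef, aux_deriv_line f (fun i => x i) (fun i => (y - x) i),
      Polynomial.derivative_sum]
    refine Finset.sum_congr rfl fun i _ => ?_
    rw [Polynomial.derivative_C_mul,
      aux_deriv_line (MvPolynomial.pderiv i f) (fun i => x i) (fun i => (y - x) i)]
  have hp2bound : ∀ t : ℝ, |Polynomial.eval t (Polynomial.derivative (Polynomial.derivative P))| ≤
      nv * S2 * Real.exp (1/2 * ‖x + t • (y - x)‖^2) := by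
    intro t
    rw [hstep, Polynomial.eval_finset_sum]
    refine le_trans (Finset.abs_sum_le_sum_abs _ _) ?_
    have hterm : ∀ i : Fin n,
        |Polynomial.eval t (Polynomial.C ((y - x) i) * ∑ j, Polynomial.C ((y - x) j) *
            MvPolynomial.aeval
              (fun i => Polynomial.C (x i) + Polynomial.C ((y - x) i) * Polynomial.X)
              (MvPolynomial.pderiv j (MvPolynomial.pderiv i f)))| ≤
          ‖y - x‖ * (‖y - x‖ * ((∑ j, C2 j i) * Real.exp (1/2 * ‖x + t • (y - x)‖^2))) := by
      intro i
      rw [Polynomial.eval_mul, Polynomial.eval_C, abs_mul]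
      refine mul_le_mul (aux_coord (y - x) i) ?_ (abs_nonneg _) (norm_nonneg _)
      rw [Polynomial.eval_finset_sum]
      refine le_trans (Finset.abs_sum_le_sum_abs _ _) ?_
      have hterm2 : ∀ j : Fin n,
          |Polynomial.eval t (Polynomial.C ((y - x) j) * MvPolynomial.aeval
              (fun i => Polynomial.C (x i) + Polynomial.C ((y - x) i) * Polynomial.X)
              (MvPolynomial.pderiv j (MvPolynomial.pderiv i f)))| ≤
            ‖y - x‖ * (C2 j i * Real.exp (1/2 * ‖x + t • (y - x)‖^2)) := by
        intro j
        rw [Polynomial.eval_mul, Polynomial.eval_C, abs_mul,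
          aux_eval_line (MvPolynomial.pderiv j (MvPolynomial.pderiv i f))
            (fun i => x i) (fun i => (y - x) i) t, hcoord t]
        exact mul_le_mul (aux_coord (y - x) j) (hC2 j i (x + t • (y - x))) (abs_nonneg _)
          (norm_nonneg _)
      refine le_trans (Finset.sum_le_sum fun j _ => hterm2 j) (le_of_eq ?_)
      rw [← Finset.mul_sum, ← Finset.sum_mul]
    refine le_trans (Finset.sum_le_sum fun i _ => hterm i) (le_of_eq ?_)
    rw [← Finset.mul_sum]
    rw [show ∑ i, ‖y - x‖ * ((∑ j, C2 j i) * Real.exp (1/2 * ‖x + t • (y - x)‖^2)) =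
      (∑ i, ∑ j, C2 j i) * Real.exp (1/2 * ‖x + t • (y - x)‖^2) * ‖y - x‖ from by
        rw [Finset.sum_mul, Finset.sum_mul]
        exact Finset.sum_congr rfl fun i _ => by ring]
    rw [hnv, hS2def]
    ring
  clear_value P
  -- convexity of the auxiliary 1-D function
  have hd1 : ∀ t : ℝ, HasDerivAt
      (fun s => Real.exp (N * Real.exp (K + 2*I*s + nv*s^2)) * Polynomial.eval s P
        - (m/2*nv)*s^2)
      (Real.exp (N * Real.exp (K + 2*I*t + nv*t^2)) *
          (N * Real.exp (K + 2*I*t + nv*t^2) * (2*I + 2*nv*t)) * Polynomial.eval t P +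
        Real.exp (N * Real.exp (K + 2*I*t + nv*t^2)) * Polynomial.eval t P.derivative
        - (m/2*nv)*(2*t)) t := fun t => aux_psi_deriv N (m/2*nv) K I nv P t
  have hd2 : ∀ t : ℝ, HasDerivAt
      (fun s => Real.exp (N * Real.exp (K + 2*I*s + nv*s^2)) *
          (N * Real.exp (K + 2*I*s + nv*s^2) * (2*I + 2*nv*s)) * Polynomial.eval s P +
        Real.exp (N * Real.exp (K + 2*I*s + nv*s^2)) * Polynomial.eval s P.derivative
        - (m/2*nv)*(2*s))
      (Real.exp (N * Real.exp (K + 2*I*t + nv*t^2)) *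
          ((N * Real.exp (K + 2*I*t + nv*t^2))^2 * (2*I + 2*nv*t)^2 * Polynomial.eval t P
            + N * Real.exp (K + 2*I*t + nv*t^2) * ((2*I + 2*nv*t)^2 + 2*nv) * Polynomial.eval t P
            + 2 * (N * Real.exp (K + 2*I*t + nv*t^2) * (2*I + 2*nv*t)) *
                Polynomial.eval t P.derivative
            + Polynomial.eval t P.derivative.derivative)
        - (m/2*nv)*2) t := fun t => aux_psi_deriv2 N (m/2*nv) K I nv P t
  have hdiff1 : Differentiable ℝ
      (fun s => Real.exp (N * Real.exp (K + 2*I*s + nv*s^2)) * Polynomial.eval s P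
        - (m/2*nv)*s^2) := fun t => (hd1 t).differentiableAt
  have hderiv1 : deriv (fun s => Real.exp (N * Real.exp (K + 2*I*s + nv*s^2)) *
        Polynomial.eval s P - (m/2*nv)*s^2) =
      fun t => Real.exp (N * Real.exp (K + 2*I*t + nv*t^2)) *
          (N * Real.exp (K + 2*I*t + nv*t^2) * (2*I + 2*nv*t)) * Polynomial.eval t P +
        Real.exp (N * Real.exp (K + 2*I*t + nv*t^2)) * Polynomial.eval t P.derivative
        - (m/2*nv)*(2*t) := funext fun t => (hd1 t).deriv
  have hdiff2 : Differentiable ℝ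
      (fun t => Real.exp (N * Real.exp (K + 2*I*t + nv*t^2)) *
          (N * Real.exp (K + 2*I*t + nv*t^2) * (2*I + 2*nv*t)) * Polynomial.eval t P +
        Real.exp (N * Real.exp (K + 2*I*t + nv*t^2)) * Polynomial.eval t P.derivative
        - (m/2*nv)*(2*t)) := fun t => (hd2 t).differentiableAt
  have hconv : ConvexOn ℝ (Icc (0:ℝ) 1)
      (fun s => Real.exp (N * Real.exp (K + 2*I*s + nv*s^2)) * Polynomial.eval s P
        - (m/2*nv)*s^2) := by
    apply convexOn_of_deriv2_nonneg (convex_Icc 0 1) hdiff1.continuous.continuousOn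
      hdiff1.differentiableOn
    · rw [hderiv1]; exact hdiff2.differentiableOn
    · intro t ht
      rw [interior_Icc] at ht
      have htIcc : t ∈ Icc (0:ℝ) 1 := Ioo_subset_Icc_self ht
      rw [show (2:ℕ) = 1 + 1 from rfl]
      simp only [Function.iterate_add_apply, Function.iterate_one]
      rw [hderiv1, (hd2 t).deriv]
      -- main inequality
      have hr0 : (0:ℝ) ≤ ‖x + t • (y - x)‖^2 := by positivity
      rw [hq_eq t]
      set r : ℝ := ‖x + t • (y - x)‖^2 with hr
      set er : ℝ := Real.exp r with her
      set eh : ℝ := Real.exp (1/2 * r) with heh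
      set Q : ℝ := 2*I + 2*nv*t with hQ
      set pt : ℝ := Polynomial.eval t P with hpt_def
      set p1 : ℝ := Polynomial.eval t P.derivative with hp1_def
      set p2 : ℝ := Polynomial.eval t P.derivative.derivative with hp2_def
      have her0 : (0:ℝ) < er := Real.exp_pos r
      have her1 : (1:ℝ) ≤ er := Real.one_le_exp hr0
      have hehe : eh ≤ er := Real.exp_le_exp.mpr (by linarith)
      have heh0 : (0:ℝ) < eh := Real.exp_pos _
      have hpt : m ≤ pt := hptm t htIcc
      have hp1 : |p1| ≤ ‖y - x‖ * S1 * Real.exp (1/4 * r) := hp1bound t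
      have hp2 : |p2| ≤ nv * S2 * eh := hp2bound t
      clear_value r er eh Q pt p1 p2
      clear hd1 hd2 hdiff1 hdiff2 hderiv1 hp1bound hp2bound hptm hPt hstep hmem
        hcoord hq_eq hC1 hC2 hC1n hC2n hmf hPdef hS1def hS2def hXcl hXcon hx hy
        hK hI ht htIcc hQ hpt_def hp1_def hp2_def P f X hN hNm
      have hp1sq : p1^2 ≤ nv * S1^2 * eh := by
        have h1 : p1^2 = |p1|^2 := (sq_abs p1).symm
        have h2 : |p1|^2 ≤ (‖y - x‖ * S1 * Real.exp (1/4 * r))^2 :=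
          pow_le_pow_left₀ (abs_nonneg _) hp1 2
        have hquarter : Real.exp (1/4 * r) * Real.exp (1/4 * r) = eh := by
          rw [← Real.exp_add, heh]; congr 1; ring
        have h3 : (‖y - x‖ * S1 * Real.exp (1/4 * r))^2 = nv * S1^2 * eh := by
          calc (‖y - x‖ * S1 * Real.exp (1/4 * r))^2
              = ‖y - x‖^2 * S1^2 * (Real.exp (1/4 * r) * Real.exp (1/4 * r)) := by ring
            _ = nv * S1^2 * eh := by rw [hquarter, ← hnv]
        linarith
      have hp2' : -(nv * S2 * eh) ≤ p2 := neg_le_of_abs_le hp2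
      have hA1 : (1:ℝ) ≤ Real.exp (N * er) :=
        Real.one_le_exp (mul_nonneg hN0 her0.le)
      -- bound on the bracket
      have h1 : 0 ≤ m*((N*er*Q)^2*pt + 2*(N*er*Q)*p1) + p1^2 := by
        have e1 : 0 ≤ (N*er*Q*m + p1)^2 := sq_nonneg _
        have e2 : 0 ≤ m * ((N*er*Q)^2 * (pt - m)) :=
          mul_nonneg hm.le (mul_nonneg (sq_nonneg _) (by linarith))
        linarith [e1, e2]
      have h2 : 2*N*m^2*nv*er ≤ m*(N*er*(Q^2+2*nv)*pt) := by
        have e1 : 0 ≤ ((m*N)*er) * (Q^2*pt) :=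
          mul_nonneg (mul_nonneg (mul_nonneg hm.le hN0) her0.le)
            (mul_nonneg (sq_nonneg Q) (le_trans hm.le hpt))
        have e2 : 0 ≤ ((m*N)*er) * (nv*(pt - m)) :=
          mul_nonneg (mul_nonneg (mul_nonneg hm.le hN0) her0.le)
            (mul_nonneg hnv0 (by linarith))
        linarith [e1, e2]
      have h4 : m * (-(nv * S2 * eh)) ≤ m * p2 := mul_le_mul_of_nonneg_left hp2' hm.le
      have h5 : (S1^2 + m*S2)*eh ≤ (S1^2 + m*S2)*er :=
        mul_le_mul_of_nonneg_left hehe (by positivity)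
      have h6 : (S1^2 + m*S2 + 2*m^2)*er ≤ 2*N*m^2*er :=
        mul_le_mul_of_nonneg_right hNm2 her0.le
      have h7 : nv*((S1^2 + m*S2)*eh) ≤ nv*((S1^2 + m*S2)*er) :=
        mul_le_mul_of_nonneg_left h5 hnv0
      have h8 : nv*((S1^2 + m*S2 + 2*m^2)*er) ≤ nv*(2*N*m^2*er) :=
        mul_le_mul_of_nonneg_left h6 hnv0
      have h9 : 2*m^2*nv ≤ 2*m^2*nv*er := by
        have e1 : 0 ≤ (2*m^2*nv) * (er - 1) :=
          mul_nonneg (mul_nonneg (by positivity : (0:ℝ) ≤ 2*m^2) hnv0)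
            (sub_nonneg.mpr her1)
        linarith [e1]
      have hmB : m*(2*m*nv) ≤ m*((N*er)^2*Q^2*pt + N*er*(Q^2+2*nv)*pt + 2*(N*er*Q)*p1 + p2) := by
        linarith [h1, h2, h4, hp1sq, h7, h8, h9]
      have hB : 2*m*nv ≤ (N*er)^2*Q^2*pt + N*er*(Q^2+2*nv)*pt + 2*(N*er*Q)*p1 + p2 :=
        le_of_mul_le_mul_left hmB hm
      have hB0 : 0 ≤ (N*er)^2*Q^2*pt + N*er*(Q^2+2*nv)*pt + 2*(N*er*Q)*p1 + p2 :=
        le_trans (by positivity) hB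
      have hAB : (N*er)^2*Q^2*pt + N*er*(Q^2+2*nv)*pt + 2*(N*er*Q)*p1 + p2 ≤
          Real.exp (N * er) * ((N*er)^2*Q^2*pt + N*er*(Q^2+2*nv)*pt + 2*(N*er*Q)*p1 + p2) :=
        le_mul_of_one_le_left hB0 hA1
      linarith [hB, hAB, mul_nonneg hm.le hnv0]
  -- use convexity at the endpoints
  have h0mem : (0:ℝ) ∈ Icc (0:ℝ) 1 := left_mem_Icc.mpr zero_le_one
  have h1mem : (1:ℝ) ∈ Icc (0:ℝ) 1 := right_mem_Icc.mpr zero_le_one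
  have hkey := hconv.2 h0mem h1mem ha hb hab
  have heb : a • (0:ℝ) + b • (1:ℝ) = b := by norm_num
  rw [heb] at hkey
  beta_reduce at hkey
  -- values of ψ at 0, 1, b
  have hpsi0 : Real.exp (N * Real.exp (K + 2*I*0 + nv*0^2)) * Polynomial.eval 0 P
      - (m/2*nv)*0^2 = Real.exp (N * Real.exp (‖x‖^2)) *
        MvPolynomial.eval (fun i => x i) f := by
    have h00 : (x + (0:ℝ) • (y - x) : EuclideanSpace ℝ (Fin n)) = x := by
      rw [zero_smul, add_zero]
    rw [hq_eq 0, hPt 0, h00]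
    norm_num
  have hpsi1 : Real.exp (N * Real.exp (K + 2*I*1 + nv*1^2)) * Polynomial.eval 1 P
      - (m/2*nv)*1^2 = Real.exp (N * Real.exp (‖y‖^2)) *
        MvPolynomial.eval (fun i => y i) f - m/2*nv := by
    have h11 : (x + (1:ℝ) • (y - x) : EuclideanSpace ℝ (Fin n)) = y := by
      rw [one_smul, add_sub_cancel]
    rw [hq_eq 1, hPt 1, h11]
    norm_num
  have hxb : (x + b • (y - x) : EuclideanSpace ℝ (Fin n)) = a • x + b • y := by
    have ha' : a = 1 - b := by linarith
    rw [ha']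
    module
  have hpsib : Real.exp (N * Real.exp (K + 2*I*b + nv*b^2)) * Polynomial.eval b P
      - (m/2*nv)*b^2 = Real.exp (N * Real.exp (‖(a • x + b • y : EuclideanSpace ℝ (Fin n))‖^2)) *
        MvPolynomial.eval (fun i => (a • x + b • y : EuclideanSpace ℝ (Fin n)) i) f
        - (m/2*nv)*b^2 := by
    rw [hq_eq b, hPt b, hxb]
  rw [hpsi0, hpsi1, hpsib, smul_eq_mul, smul_eq_mul] at hkey
  -- conclude
  show Real.exp (N * Real.exp (‖(a • x + b • y : EuclideanSpace ℝ (Fin n))‖^2)) *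
      MvPolynomial.eval (fun i => (a • x + b • y : EuclideanSpace ℝ (Fin n)) i) f ≤
    a • (Real.exp (N * Real.exp (‖x‖^2)) * MvPolynomial.eval (fun i => x i) f) +
    b • (Real.exp (N * Real.exp (‖y‖^2)) * MvPolynomial.eval (fun i => y i) f) -
    a * b * (m / 2 * ‖x - y‖^2)
  rw [norm_sub_rev x y]
  rw [smul_eq_mul, smul_eq_mul]
  have hceq : (m/2*nv)*b^2 - b*(m/2*nv) = -(a*b*(m/2*‖y - x‖^2)) := by
    rw [← hnv]
    have ha' : a = 1 - b := by linarith
    rw [ha']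
    ring
  linarith [hkey, hceq]
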